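/- ∑_{k=1}^∞ (729/784)^k / C(3k,k) = 27/169 + (994√3/2197)·arctan(√3/5) − (112/2197)·log(16/7). -/

import Mathlib

open Real

open intervalIntegral in
section

lemma beta_nat (a b : ℕ) : ∫ x in (0:ℝ)..1, x^a*(1-x)^b
    = (a.factorial * b.factorial : ℝ) / (a+b+1).factorial := by
  induction b generalizing a with
  | zero =>
    simp only [pow_zero, mul_one, integral_pow, Nat.add_zero, Nat.factorial]
    push_cast
    field_simp
    simp
  | succ b ih =>
    have key : ∫ x in (0:ℝ)..1,
        ((a+1:ℝ) * (x^a*(1-x)^(b+1)) - (b+1:ℝ) * (x^(a+1)*(1-x)^b)) = 0 := by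
      have : ∀ x ∈ Set.uIcc (0:ℝ) 1, HasDerivAt (fun x : ℝ => x^(a+1)*(1-x)^(b+1))
          ((a+1:ℝ) * (x^a*(1-x)^(b+1)) - (b+1:ℝ) * (x^(a+1)*(1-x)^b)) x := by
        intro x _
        have h1 : HasDerivAt (fun x : ℝ => x^(a+1)) ((a+1:ℝ)*x^a) x := by
          simpa using (hasDerivAt_pow (a+1) x)
        have h2 : HasDerivAt (fun x : ℝ => (1-x)^(b+1)) (-((b+1:ℝ)*(1-x)^b)) x := by
          have := ((hasDerivAt_pow (b+1) (1-x)).comp x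
            (((hasDerivAt_id x).const_sub 1)))
          simpa [Function.comp_def] using this
        have := h1.mul h2
        refine this.congr_deriv ?_
        push_cast
        ring
      rw [intervalIntegral.integral_eq_sub_of_hasDerivAt this (by
        apply Continuous.intervalIntegrable; continuity)]
      simp
    have i1 : IntervalIntegrable (fun x : ℝ => x^a*(1-x)^(b+1)) MeasureTheory.volume 0 1 := by
      apply Continuous.intervalIntegrable; continuity
    have i2 : IntervalIntegrable (fun x : ℝ => x^(a+1)*(1-x)^b) MeasureTheory.volume 0 1 := by
      apply Continuous.intervalIntegrable; continuity
    rw [intervalIntegral.integral_sub (i1.const_mul _) (i2.const_mul _),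
      intervalIntegral.integral_const_mul, intervalIntegral.integral_const_mul] at key
    have hrec : (a+1:ℝ) * ∫ x in (0:ℝ)..1, x^a*(1-x)^(b+1)
        = (b+1:ℝ) * ((a+1).factorial * b.factorial / (a+1+b+1).factorial) := by
      rw [← ih (a+1)]; linarith
    have h2 : (∫ x in (0:ℝ)..1, x^a*(1-x)^(b+1))
        = (b+1:ℝ) * ((a+1).factorial * b.factorial / (a+1+b+1).factorial) / (a+1) := by
      field_simp at hrec ⊢; linarith
    rw [h2, show a+(b+1)+1 = a+1+b+1 from by ring, Nat.factorial_succ b,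
      Nat.factorial_succ a]
    have hne : ((a+1+b+1).factorial : ℝ) ≠ 0 := by positivity
    field_simp
    push_cast
    ring

lemma term_eq (k : ℕ) : (729/784:ℝ)^(k+1) / (((3*(k+1)).choose (k+1) : ℕ) : ℝ)
    = ∫ t in (0:ℝ)..1, ((3*(k:ℝ)+4) * (729/784:ℝ)^(k+1)) * (t^(k+1) * (1-t)^(2*k+2)) := by
  rw [intervalIntegral.integral_const_mul, beta_nat,
    show (k+1) + (2*k+2) + 1 = 3*k+4 from by ring]
  have h2 : ((3*(k+1)).choose (k+1)) * ((k+1).factorial * (2*k+2).factorial)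
      = (3*k+3).factorial := by
    have h := Nat.choose_mul_factorial_mul_factorial (show (k+1) ≤ 3*(k+1) by omega)
    rw [show 3*(k+1) - (k+1) = 2*k+2 from by omega] at h
    rw [show (3*k+3) = 3*(k+1) from by ring, ← mul_assoc]
    exact h
  have h3 : (3*k+4).factorial = (3*k+4) * (3*k+3).factorial := Nat.factorial_succ _
  have hc : 0 < (3*(k+1)).choose (k+1) := Nat.choose_pos (by omega)
  have hcR : (((3*(k+1)).choose (k+1) : ℕ) : ℝ) ≠ 0 := by positivity
  have hfR : ((3*k+3).factorial : ℝ) ≠ 0 := by positivity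
  rw [h3]
  have h2R : (((3*(k+1)).choose (k+1) : ℕ) : ℝ) * ((k+1).factorial * (2*k+2).factorial)
      = ((3*k+3).factorial : ℝ) := by exact_mod_cast congrArg (Nat.cast : ℕ → ℝ) h2
  field_simp
  push_cast
  linear_combination (-(3*(k:ℝ)+4)) * h2R

lemma tsum_pt {u : ℝ} (hu : ‖u‖ < 1) :
    ∑' k : ℕ, ((3*(k:ℝ)+4) * u^(k+1)) = 3*u/(1-u)^2 + u/(1-u) := by
  have hu1 : (1:ℝ) - u ≠ 0 := by
    have : |u| < 1 := hu
    have := abs_lt.1 this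
    intro h; linarith
  have hs1 : Summable (fun n : ℕ => (n:ℝ) * u^n) := by
    simpa using summable_pow_mul_geometric_of_norm_lt_one 1 hu
  have h1 : ∑' n : ℕ, (n:ℝ) * u^n = u/(1-u)^2 :=
    tsum_coe_mul_geometric_of_norm_lt_one hu
  have hsg : Summable (fun n : ℕ => u^n) := summable_geometric_of_norm_lt_one hu
  have e1 : ∑' k : ℕ, ((k:ℝ)+1) * u^(k+1) = u/(1-u)^2 := by
    have h0 := hs1.tsum_eq_zero_add
    simp only [Nat.cast_zero, zero_mul, pow_zero, zero_add] at h0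
    rw [← h1, h0]
    apply tsum_congr; intro n; push_cast; ring
  have e2 : ∑' k : ℕ, u^(k+1) = u/(1-u) := by
    simp only [pow_succ']
    rw [tsum_mul_left, tsum_geometric_of_norm_lt_one hu]
    rw [div_eq_mul_inv]
  have hs1' : Summable (fun k : ℕ => ((k:ℝ)+1) * u^(k+1)) := by
    have := (summable_nat_add_iff 1).2 hs1
    apply this.congr
    intro n; push_cast; ring
  have hsg' : Summable (fun k : ℕ => u^(k+1)) :=
    (summable_nat_add_iff 1).2 hsg
  calc ∑' k : ℕ, ((3*(k:ℝ)+4) * u^(k+1))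
      = ∑' k : ℕ, (3*(((k:ℝ)+1) * u^(k+1)) + u^(k+1)) := by
        apply tsum_congr; intro k; ring
    _ = 3*(u/(1-u)^2) + u/(1-u) := by
        rw [Summable.tsum_add ((hs1'.mul_left 3)) hsg', tsum_mul_left, e1, e2]
    _ = 3*u/(1-u)^2 + u/(1-u) := by ring

noncomputable def Fa (t : ℝ) : ℝ :=
  (224/6591)*Real.log (16-9*t) + (12544/4563)*(16-9*t)⁻¹
  + (-112/6591)*Real.log (81*t^2-18*t+49)
  + (994*Real.sqrt 3/6591)*Real.arctan ((9*t-1)/(4*Real.sqrt 3))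
  + (-62720/1521)*(81*t^2-18*t+49)⁻¹
  + (23128/4563)*((9*t-1)/(81*t^2-18*t+49)) - t

lemma hQpos (t : ℝ) : 0 < 81*t^2-18*t+49 := by nlinarith [sq_nonneg (9*t-1)]

lemma Fa_deriv {t : ℝ} (ht : t ∈ Set.Icc (0:ℝ) 1) :
    HasDerivAt Fa
      (3*(729/784*t*(1-t)^2)/(1-729/784*t*(1-t)^2)^2
        + (729/784*t*(1-t)^2)/(1-729/784*t*(1-t)^2)) t := by
  obtain ⟨ht0, ht1⟩ := ht
  have hL : (0:ℝ) < 16-9*t := by linarith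
  have hLne : (16:ℝ)-9*t ≠ 0 := ne_of_gt hL
  have hQ : (0:ℝ) < 81*t^2-18*t+49 := hQpos t
  have hQne : (81*t^2-18*t+49 : ℝ) ≠ 0 := ne_of_gt hQ
  have hs : Real.sqrt 3 ^ 2 = 3 := Real.sq_sqrt (by norm_num)
  have hs0 : Real.sqrt 3 ≠ 0 := by positivity
  have hD : (1:ℝ) - 729/784*t*(1-t)^2 ≠ 0 := by
    have h784 : (784:ℝ) - 729*(t*(1-t)^2) = (16-9*t)*(81*t^2-18*t+49) := by ring
    have : (0:ℝ) < 784 - 729*(t*(1-t)^2) := h784 ▸ mul_pos hL hQ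
    intro h
    nlinarith
  -- inner derivatives
  have dL : HasDerivAt (fun t : ℝ => 16-9*t) (-9) t := by
    simpa using ((hasDerivAt_id t).const_mul (9:ℝ)).const_sub 16
  have dQ : HasDerivAt (fun t : ℝ => 81*t^2-18*t+49) (162*t-18) t := by
    have h1 : HasDerivAt (fun t : ℝ => t^2) (2*t) t := by simpa using hasDerivAt_pow 2 t
    have := ((h1.const_mul (81:ℝ)).sub ((hasDerivAt_id t).const_mul (18:ℝ))).add_const 49
    simpa using this.congr_deriv (by ring)
  have dW : HasDerivAt (fun t : ℝ => (9*t-1)/(4*Real.sqrt 3)) (9/(4*Real.sqrt 3)) t := by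
    have h1 : HasDerivAt (fun t : ℝ => 9*t-1) 9 t := by
      simpa using ((hasDerivAt_id t).const_mul (9:ℝ)).sub_const 1
    simpa [div_eq_mul_inv] using h1.mul_const (4*Real.sqrt 3)⁻¹
  have p1 := (dL.log hLne).const_mul (224/6591 : ℝ)
  have p2 := (dL.inv hLne).const_mul (12544/4563 : ℝ)
  have p3 := (dQ.log hQne).const_mul (-112/6591 : ℝ)
  have p4 := (dW.arctan).const_mul (994*Real.sqrt 3/6591 : ℝ)
  have p5 := (dQ.inv hQne).const_mul (-62720/1521 : ℝ)
  have p6h : HasDerivAt (fun t : ℝ => (9*t-1)/(81*t^2-18*t+49))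
      ((9*(81*t^2-18*t+49) - (9*t-1)*(162*t-18))/(81*t^2-18*t+49)^2) t := by
    have h1 : HasDerivAt (fun t : ℝ => 9*t-1) 9 t := by
      simpa using ((hasDerivAt_id t).const_mul (9:ℝ)).sub_const 1
    exact h1.div dQ hQne
  have p6 := p6h.const_mul (23128/4563 : ℝ)
  have p7 := hasDerivAt_id t
  have total := ((((((p1.add p2).add p3).add p4).add p5).add p6).sub p7)
  have harc : (994*Real.sqrt 3/6591 : ℝ) * (1 / (1 + ((9*t-1)/(4*Real.sqrt 3))^2) * (9/(4*Real.sqrt 3)))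
      = (35784/2197) / (81*t^2-18*t+49) := by
    have hden : 1 + ((9*t-1)/(4*Real.sqrt 3))^2 = (81*t^2-18*t+49)/48 := by
      rw [div_pow]
      rw [show (4*Real.sqrt 3)^2 = 48 by rw [mul_pow, hs]; norm_num]
      field_simp
      ring
    rw [hden]
    field_simp
    ring
  refine total.congr_deriv ?_
  rw [harc]
  have h784 : (1:ℝ) - 729/784*t*(1-t)^2 = ((16-9*t)*(81*t^2-18*t+49))/784 := by ring
  rw [h784]
  field_simp [show t*(t*81-18)+49 ≠ 0 by convert hQne using 1; ring]
  ring

lemma hDpos {t : ℝ} (ht0 : 0 ≤ t) (ht1 : t ≤ 1) : 0 < 1 - 729/784*t*(1-t)^2 := by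
  nlinarith [mul_pos (show (0:ℝ) < 16-9*t by linarith) (hQpos t)]

lemma arctan_id : Real.arctan (8/(4*Real.sqrt 3)) + Real.arctan (1/(4*Real.sqrt 3))
    = 3 * Real.arctan (Real.sqrt 3/5) := by
  have hs : Real.sqrt 3 ^ 2 = 3 := Real.sq_sqrt (by norm_num)
  have hsp : 0 < Real.sqrt 3 := Real.sqrt_pos.2 (by norm_num)
  have h1 : Real.arctan (Real.sqrt 3/5) + Real.arctan (Real.sqrt 3/5)
      = Real.arctan (5*Real.sqrt 3/11) := by
    rw [Real.arctan_add (by nlinarith)]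
    congr 1
    rw [show (Real.sqrt 3/5) * (Real.sqrt 3/5) = 3/25 by nlinarith]
    field_simp
    ring
  have h2 : Real.arctan (5*Real.sqrt 3/11) + Real.arctan (Real.sqrt 3/5)
      = Real.arctan (9*Real.sqrt 3/10) := by
    rw [Real.arctan_add (by nlinarith)]
    congr 1
    rw [show (5*Real.sqrt 3/11) * (Real.sqrt 3/5) = 3/11 by nlinarith]
    field_simp
    ring
  have h3 : Real.arctan (8/(4*Real.sqrt 3)) + Real.arctan (1/(4*Real.sqrt 3))
      = Real.arctan (9*Real.sqrt 3/10) := by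
    rw [Real.arctan_add (by
      rw [show (8/(4*Real.sqrt 3)) * (1/(4*Real.sqrt 3)) = 1/6 by
        rw [div_mul_div_comm, mul_one]
        rw [show (4*Real.sqrt 3)*(4*Real.sqrt 3) = 48 by nlinarith]
        norm_num]
      norm_num)]
    congr 1
    rw [show (8/(4*Real.sqrt 3)) * (1/(4*Real.sqrt 3)) = 1/6 by
      rw [div_mul_div_comm, mul_one]
      rw [show (4*Real.sqrt 3)*(4*Real.sqrt 3) = 48 by nlinarith]
      norm_num]
    rw [div_add_div _ _ (by positivity) (by positivity),
      show 8*(4*Real.sqrt 3)+4*Real.sqrt 3*1 = 36*Real.sqrt 3 by ring,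
      show (4*Real.sqrt 3)*(4*Real.sqrt 3) = 48 by nlinarith]
    norm_num
    field_simp
    ring
  rw [h3, show (3:ℝ) * Real.arctan (Real.sqrt 3/5)
    = (Real.arctan (Real.sqrt 3/5) + Real.arctan (Real.sqrt 3/5)) + Real.arctan (Real.sqrt 3/5) by ring,
    h1, h2]

lemma endpoints : Fa 1 - Fa 0 = 27/169 + (994*Real.sqrt 3/2197)*Real.arctan (Real.sqrt 3/5)
    - (112/2197)*Real.log (16/7) := by
  have hl112 : Real.log (16*7 : ℝ) = Real.log 16 + Real.log 7 :=
    Real.log_mul (by norm_num) (by norm_num)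
  have hl49 : Real.log (49:ℝ) = 2 * Real.log 7 := by
    rw [show (49:ℝ) = 7^2 by norm_num, Real.log_pow]; push_cast; ring
  have hl167 : Real.log (16/7 : ℝ) = Real.log 16 - Real.log 7 :=
    Real.log_div (by norm_num) (by norm_num)
  have harcneg : Real.arctan ((9*(0:ℝ)-1)/(4*Real.sqrt 3)) = - Real.arctan (1/(4*Real.sqrt 3)) := by
    rw [show (9*(0:ℝ)-1)/(4*Real.sqrt 3) = -(1/(4*Real.sqrt 3)) by ring, Real.arctan_neg]
  unfold Fa
  rw [harcneg]
  norm_num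
  rw [show (112:ℝ) = 16*7 by norm_num] at *
  rw [hl112, hl49, hl167]
  have h3 := arctan_id
  have h4 : Real.sqrt 3 * Real.arctan (8/(4*Real.sqrt 3)) * (994/6591)
        + Real.sqrt 3 * Real.arctan (1/(4*Real.sqrt 3)) * (994/6591)
      = Real.sqrt 3 * Real.arctan (Real.sqrt 3/5) * (994/2197) := by
    linear_combination (Real.sqrt 3 * (994/6591)) * h3
  norm_num at h4 ⊢
  ring_nf at h4 ⊢
  linarith [h4]

lemma ftc_val : (∫ t in (0:ℝ)..1, (3*(729/784*t*(1-t)^2)/(1-729/784*t*(1-t)^2)^2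
      + 729/784*t*(1-t)^2/(1-729/784*t*(1-t)^2)))
    = 27/169 + (994*Real.sqrt 3/2197)*Real.arctan (Real.sqrt 3/5)
      - (112/2197)*Real.log (16/7) := by
  rw [← endpoints]
  apply intervalIntegral.integral_eq_sub_of_hasDerivAt
  · intro t ht
    rw [Set.uIcc_of_le (by norm_num)] at ht
    exact Fa_deriv ht
  · apply ContinuousOn.intervalIntegrable
    rw [Set.uIcc_of_le (by norm_num)]
    apply ContinuousOn.add
    · apply ContinuousOn.div (by fun_prop) (by fun_prop)
      intro t ht
      exact pow_ne_zero 2 (ne_of_gt (hDpos ht.1 ht.2))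
    · apply ContinuousOn.div (by fun_prop) (by fun_prop)
      intro t ht
      exact ne_of_gt (hDpos ht.1 ht.2)

end

theorem stmt_11 :
    ∑' k : ℕ, (729/784 : ℝ)^(k+1) / ((((3*(k+1)).choose (k+1) : ℕ)) : ℝ) =
    27/169 + (994*Real.sqrt 3/2197)*Real.arctan (Real.sqrt 3/5) - (112/2197)*Real.log (16/7) := by
  set f : ℕ → ℝ → ℝ := fun k t => ((3*(k:ℝ)+4) * (729/784:ℝ)^(k+1)) * (t^(k+1) * (1-t)^(2*k+2))
    with hf_def
  have hterm : ∀ k : ℕ, (729/784:ℝ)^(k+1) / (((3*(k+1)).choose (k+1) : ℕ) : ℝ)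
      = ∫ t in Set.Ioc (0:ℝ) 1, f k t := by
    intro k
    rw [← intervalIntegral.integral_of_le (by norm_num : (0:ℝ) ≤ 1)]
    exact term_eq k
  rw [tsum_congr hterm]
  have hmeas : ∀ k : ℕ, MeasureTheory.AEStronglyMeasurable (f k)
      (MeasureTheory.volume.restrict (Set.Ioc (0:ℝ) 1)) := by
    intro k
    exact (Continuous.aestronglyMeasurable (by fun_prop))
  have hbound : ∀ k : ℕ, ∀ t ∈ Set.Ioc (0:ℝ) 1, ‖f k t‖ ≤ (3*(k:ℝ)+4) * (729/784:ℝ)^(k+1) := by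
    intro k t ht
    obtain ⟨ht0, ht1⟩ := ht
    have h1 : (0:ℝ) ≤ t := le_of_lt ht0
    have h2 : (0:ℝ) ≤ 1 - t := by linarith
    have h3 : t^(k+1) ≤ 1 := pow_le_one₀ h1 ht1
    have h4 : (1-t)^(2*k+2) ≤ 1 := pow_le_one₀ h2 (by linarith)
    rw [Real.norm_eq_abs, abs_of_nonneg (by positivity)]
    calc ((3*(k:ℝ)+4) * (729/784:ℝ)^(k+1)) * (t^(k+1) * (1-t)^(2*k+2))
        ≤ ((3*(k:ℝ)+4) * (729/784:ℝ)^(k+1)) * (1*1) := by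
          apply mul_le_mul_of_nonneg_left (by exact mul_le_mul h3 h4 (by positivity) (by norm_num))
            (by positivity)
      _ = (3*(k:ℝ)+4) * (729/784:ℝ)^(k+1) := by ring
  have hsumc : Summable (fun k : ℕ => (3*(k:ℝ)+4) * (729/784:ℝ)^(k+1)) := by
    have hx : ‖(729/784:ℝ)‖ < 1 := by rw [Real.norm_eq_abs]; rw [abs_of_pos (by norm_num)]; norm_num
    have hs1 : Summable (fun n : ℕ => (n:ℝ) * (729/784:ℝ)^n) := by
      simpa using summable_pow_mul_geometric_of_norm_lt_one 1 hx
    have hs2 : Summable (fun n : ℕ => (729/784:ℝ)^n) := summable_geometric_of_norm_lt_one hx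
    have := ((hs1.mul_left 3).add (hs2.mul_left 4)).mul_left (729/784:ℝ)
    apply this.congr
    intro n
    push_cast
    ring
  have hswap : ∑' k : ℕ, ∫ t in Set.Ioc (0:ℝ) 1, f k t
      = ∫ t in Set.Ioc (0:ℝ) 1, ∑' k : ℕ, f k t := by
    rw [← MeasureTheory.integral_tsum hmeas]
    rw [← lt_top_iff_ne_top]
    calc ∑' k : ℕ, ∫⁻ t in Set.Ioc (0:ℝ) 1, ‖f k t‖₊
        ≤ ∑' k : ℕ, ENNReal.ofReal ((3*(k:ℝ)+4) * (729/784:ℝ)^(k+1)) := by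
          apply ENNReal.tsum_le_tsum
          intro k
          calc ∫⁻ t in Set.Ioc (0:ℝ) 1, ‖f k t‖₊
              ≤ ∫⁻ _ in Set.Ioc (0:ℝ) 1, ENNReal.ofReal ((3*(k:ℝ)+4) * (729/784:ℝ)^(k+1)) := by
                apply MeasureTheory.setLIntegral_mono' measurableSet_Ioc
                intro t ht
                rw [← ENNReal.ofReal_coe_nnreal, coe_nnnorm]
                exact ENNReal.ofReal_le_ofReal (hbound k t ht)
            _ = ENNReal.ofReal ((3*(k:ℝ)+4) * (729/784:ℝ)^(k+1)) := by
                rw [MeasureTheory.setLIntegral_const]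
                simp
      _ = ENNReal.ofReal (∑' k : ℕ, (3*(k:ℝ)+4) * (729/784:ℝ)^(k+1)) :=
          (ENNReal.ofReal_tsum_of_nonneg (fun k => by positivity) hsumc).symm
      _ < ⊤ := ENNReal.ofReal_lt_top
  rw [hswap]
  have hpt : ∀ t ∈ Set.Ioc (0:ℝ) 1, ∑' k : ℕ, f k t
      = 3*(729/784*t*(1-t)^2)/(1-729/784*t*(1-t)^2)^2
        + 729/784*t*(1-t)^2/(1-729/784*t*(1-t)^2) := by
    intro t ht
    obtain ⟨ht0, ht1⟩ := ht
    have hu1 : 0 < 1 - 729/784*t*(1-t)^2 := hDpos (le_of_lt ht0) ht1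
    have hu0 : 0 ≤ 729/784*t*(1-t)^2 := by positivity
    have hnorm : ‖729/784*t*(1-t)^2‖ < 1 := by
      rw [Real.norm_eq_abs, abs_of_nonneg hu0]; linarith
    rw [← tsum_pt hnorm]
    apply tsum_congr
    intro k
    rw [hf_def]
    simp only
    rw [show (729/784*t*(1-t)^2)^(k+1)
      = (729/784:ℝ)^(k+1) * (t^(k+1) * (1-t)^(2*k+2)) by
        rw [mul_pow, mul_pow, ← pow_mul]
        ring_nf]
    ring
  rw [MeasureTheory.setIntegral_congr_fun measurableSet_Ioc hpt]
  rw [← intervalIntegral.integral_of_le (by norm_num : (0:ℝ) ≤ 1)]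
  exact ftc_val
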